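/- Let b : (0,T] → ℝ be continuously differentiable with finite limit b(0) < 0, and suppose lim_{t↓0} |b'(t)| t^ε < ∞ for some 0 < ε < 1/2. Then there exists K > 0 such that |(b(t) - b(s))/(t-s)| · t^ε < K for all 0 ≤ s < t ≤ T. -/

import Mathlib

/-- If `b` is continuously differentiable on `(0,T]`, extended
continuously to `[0,T]` with `b 0 < 0`, and `|b'(t)| t^ε` has a finite limit as
`t ↓ 0` for some `0 < ε < 1/2`, then `|(b t - b s)/(t-s)| · t^ε` is bounded on
`0 ≤ s < t ≤ T`. -/
theorem stmt1 (T : ℝ) (hT : 0 < T) (b b' : ℝ → ℝ) (ε : ℝ) (hε : 0 < ε) (hε' : ε < 1/2)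
    (hderiv : ∀ t ∈ Set.Ioc (0:ℝ) T, HasDerivAt b (b' t) t)
    (hb'cont : ContinuousOn b' (Set.Ioc 0 T))
    (hbcont : ContinuousOn b (Set.Icc 0 T))
    (hb0 : b 0 < 0)
    (hlim : ∃ L : ℝ, Filter.Tendsto (fun t => |b' t| * t ^ ε) (nhdsWithin 0 (Set.Ioi 0)) (nhds L)) :
    ∃ K > 0, ∀ s t : ℝ, 0 ≤ s → s < t → t ≤ T →
      |(b t - b s) / (t - s)| * t ^ ε < K := by
  obtain ⟨L, hL⟩ := hlim
  have hε1 : ε < 1 := hε'.trans (by norm_num)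
  have h1ε : (0:ℝ) < 1 - ε := by linarith
  -- Step 1: a uniform bound `|b' u| * u ^ ε ≤ C` on `(0, T]`.
  obtain ⟨C, hC0, hC⟩ : ∃ C > 0, ∀ u ∈ Set.Ioc (0:ℝ) T, |b' u| * u ^ ε ≤ C := by
    have hev : ∀ᶠ u in nhdsWithin 0 (Set.Ioi 0), |b' u| * u ^ ε < L + 1 :=
      hL.eventually_lt_const (by linarith)
    rw [eventually_nhdsWithin_iff, Metric.eventually_nhds_iff] at hev
    obtain ⟨δ, hδ0, hδ⟩ := hev
    set δ' : ℝ := min (δ/2) T with hδ'def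
    have hδ'0 : 0 < δ' := lt_min (by linarith) hT
    have hδ'T : δ' ≤ T := min_le_right _ _
    have hsub : Set.Icc δ' T ⊆ Set.Ioc 0 T := fun u hu => ⟨lt_of_lt_of_le hδ'0 hu.1, hu.2⟩
    have hcont : ContinuousOn (fun u => |b' u| * u ^ ε) (Set.Icc δ' T) := by
      apply ContinuousOn.mul
      · exact ((hb'cont.mono hsub).abs)
      · exact (continuousOn_id.rpow_const fun u hu => Or.inl (ne_of_gt (hsub hu).1))
    obtain ⟨M, hM⟩ := (isCompact_Icc).exists_bound_of_continuousOn hcont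
    refine ⟨max (|L| + 1) (|M| + 1), lt_max_of_lt_left (by positivity), fun u hu => ?_⟩
    rcases lt_or_ge u δ' with h | h
    · have hd : dist u 0 < δ := by
        rw [Real.dist_eq, sub_zero, abs_of_pos hu.1]
        exact h.trans_le ((min_le_left _ _).trans (by linarith))
      have h2 := hδ hd hu.1
      refine le_trans (le_of_lt h2) (le_trans ?_ (le_max_left _ _))
      have := le_abs_self L; linarith
    · have hu' : u ∈ Set.Icc δ' T := ⟨h, hu.2⟩
      have h3 := hM u hu'
      rw [Real.norm_eq_abs] at h3
      refine le_trans (le_abs_self _) (le_trans ?_ (le_max_right _ _))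
      exact le_trans h3 (by linarith [le_abs_self M])
  -- consequence: pointwise bound on `b'`
  have hb'le : ∀ u ∈ Set.Ioc (0:ℝ) T, |b' u| ≤ C * u ^ (-ε) := by
    intro u hu
    have hu0 : 0 < u := hu.1
    have huε : 0 < u ^ ε := Real.rpow_pos_of_pos hu0 ε
    rw [Real.rpow_neg hu0.le, ← div_eq_mul_inv, le_div_iff₀ huε]
    exact hC u hu
  -- Step 2: FTC estimate for `0 < s < t ≤ T`.
  have key : ∀ s t : ℝ, 0 < s → s < t → t ≤ T →
      |b t - b s| ≤ C * ((t ^ (1 - ε) - s ^ (1 - ε)) / (1 - ε)) := by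
    intro s t hs hst htT
    have hsub : Set.uIcc s t ⊆ Set.Ioc 0 T := by
      rw [Set.uIcc_of_le hst.le]
      exact fun u hu => ⟨lt_of_lt_of_le hs hu.1, hu.2.trans htT⟩
    have hint : IntervalIntegrable b' MeasureTheory.volume s t :=
      (hb'cont.mono hsub).intervalIntegrable
    have hftc : b t - b s = ∫ u in s..t, b' u :=
      (intervalIntegral.integral_eq_sub_of_hasDerivAt
        (fun x hx => hderiv x (hsub hx)) hint).symm
    have hintabs : IntervalIntegrable (fun u => |b' u|) MeasureTheory.volume s t :=
      (hb'cont.mono hsub).abs.intervalIntegrable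
    have hintrpow : IntervalIntegrable (fun u => C * u ^ (-ε)) MeasureTheory.volume s t :=
      (intervalIntegral.intervalIntegrable_rpow' (by linarith)).const_mul C
    have h1 : |∫ u in s..t, b' u| ≤ ∫ u in s..t, |b' u| :=
      intervalIntegral.abs_integral_le_integral_abs hst.le
    have h2 : (∫ u in s..t, |b' u|) ≤ ∫ u in s..t, C * u ^ (-ε) := by
      apply intervalIntegral.integral_mono_on hst.le hintabs hintrpow
      intro x hx
      exact hb'le x ⟨lt_of_lt_of_le hs hx.1, hx.2.trans htT⟩
    have h3 : (∫ u in s..t, C * u ^ (-ε)) = C * ((t ^ (1 - ε) - s ^ (1 - ε)) / (1 - ε)) := by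
      rw [intervalIntegral.integral_const_mul, integral_rpow (Or.inl (by linarith))]
      have he : -ε + 1 = 1 - ε := by ring
      rw [he]
    rw [hftc]
    calc |∫ u in s..t, b' u| ≤ ∫ u in s..t, |b' u| := h1
      _ ≤ ∫ u in s..t, C * u ^ (-ε) := h2
      _ = C * ((t ^ (1 - ε) - s ^ (1 - ε)) / (1 - ε)) := h3
  -- simplified bound for positive s
  have keyP : ∀ s t : ℝ, 0 < s → s < t → t ≤ T →
      |b t - b s| ≤ C * (t ^ (1 - ε) / (1 - ε)) := by
    intro s t hs hst htT
    refine (key s t hs hst htT).trans ?_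
    have h0 : (0:ℝ) ≤ s ^ (1 - ε) := Real.rpow_nonneg hs.le _
    gcongr
    linarith
  -- bound including s = 0, by a limiting argument
  have key0 : ∀ s t : ℝ, 0 ≤ s → s < t → t ≤ T →
      |b t - b s| ≤ C * (t ^ (1 - ε) / (1 - ε)) := by
    intro s t hs hst htT
    rcases hs.lt_or_eq with hs' | hs'
    · exact keyP s t hs' hst htT
    · subst hs'
      have ht0 : (0:ℝ) < t := hst
      have hne : (nhdsWithin (0:ℝ) (Set.Ioo 0 t)).NeBot := by
        apply mem_closure_iff_nhdsWithin_neBot.mp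
        rw [closure_Ioo (ne_of_lt ht0)]
        exact ⟨le_refl 0, ht0.le⟩
      have hb0cont : Filter.Tendsto b (nhdsWithin 0 (Set.Icc 0 T)) (nhds (b 0)) :=
        hbcont 0 ⟨le_refl 0, hT.le⟩
      have htend : Filter.Tendsto (fun s' => |b t - b s'|) (nhdsWithin 0 (Set.Ioo 0 t))
          (nhds |b t - b 0|) := by
        have hb' : Filter.Tendsto b (nhdsWithin 0 (Set.Ioo 0 t)) (nhds (b 0)) :=
          hb0cont.mono_left (nhdsWithin_mono 0 (fun u hu => ⟨hu.1.le, hu.2.le.trans htT⟩))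
        exact (tendsto_const_nhds.sub hb').abs
      refine le_of_tendsto htend ?_
      filter_upwards [self_mem_nhdsWithin] with s' hs'
      exact keyP s' t hs'.1 hs'.2 htT
  -- the two cases
  refine ⟨2 * C / (1 - ε) + 2 * C + 1, by positivity, fun s t hs hst htT => ?_⟩
  have ht0 : (0:ℝ) < t := lt_of_le_of_lt hs hst
  have hts : (0:ℝ) < t - s := by linarith
  have htε : (0:ℝ) < t ^ ε := Real.rpow_pos_of_pos ht0 ε
  have habs : |(b t - b s) / (t - s)| = |b t - b s| / (t - s) := by
    rw [abs_div, abs_of_pos hts]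
  rw [habs]
  rcases lt_or_ge s (t / 2) with hcase | hcase
  · -- s < t/2 : use `key0`
    have hb := key0 s t hs hst htT
    have hq : |b t - b s| / (t - s) * t ^ ε ≤ C * (t ^ (1 - ε) / (1 - ε)) / (t - s) * t ^ ε := by
      gcongr
    refine lt_of_le_of_lt hq ?_
    have hprod : t ^ (1 - ε) * t ^ ε = t := by
      rw [← Real.rpow_add ht0]; norm_num
    have heq : C * (t ^ (1 - ε) / (1 - ε)) / (t - s) * t ^ ε
        = C / (1 - ε) * (t / (t - s)) := by
      field_simp
      ring_nf
      rw [mul_comm (t ^ (1 - ε)) (t ^ ε), mul_comm (t ^ ε) (t ^ (1-ε))] at *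
      nlinarith [hprod]
    rw [heq]
    have hlt2 : t / (t - s) < 2 := by
      rw [div_lt_iff₀ hts]; linarith
    have hCd : (0:ℝ) < C / (1 - ε) := by positivity
    calc C / (1 - ε) * (t / (t - s)) < C / (1 - ε) * 2 := by
          apply mul_lt_mul_of_pos_left hlt2 hCd
      _ = 2 * C / (1 - ε) := by ring
      _ < 2 * C / (1 - ε) + 2 * C + 1 := by linarith
  · -- t/2 ≤ s : use the pointwise bound on the integrand
    have hs0 : (0:ℝ) < s := lt_of_lt_of_le (by linarith) hcase
    -- |b t - b s| ≤ C * s^(-ε) * (t - s)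
    have hbnd : |b t - b s| ≤ C * s ^ (-ε) * (t - s) := by
      have hsub : Set.uIcc s t ⊆ Set.Ioc 0 T := by
        rw [Set.uIcc_of_le hst.le]
        exact fun u hu => ⟨lt_of_lt_of_le hs0 hu.1, hu.2.trans htT⟩
      have hint : IntervalIntegrable b' MeasureTheory.volume s t :=
        (hb'cont.mono hsub).intervalIntegrable
      have hftc : b t - b s = ∫ u in s..t, b' u :=
        (intervalIntegral.integral_eq_sub_of_hasDerivAt
          (fun x hx => hderiv x (hsub hx)) hint).symm
      have hintabs : IntervalIntegrable (fun u => |b' u|) MeasureTheory.volume s t :=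
        (hb'cont.mono hsub).abs.intervalIntegrable
      have h1 : |∫ u in s..t, b' u| ≤ ∫ u in s..t, |b' u| :=
        intervalIntegral.abs_integral_le_integral_abs hst.le
      have h2 : (∫ u in s..t, |b' u|) ≤ ∫ u in s..t, C * s ^ (-ε) := by
        apply intervalIntegral.integral_mono_on hst.le hintabs intervalIntegrable_const
        intro x hx
        have hx' : x ∈ Set.Ioc (0:ℝ) T := ⟨lt_of_lt_of_le hs0 hx.1, hx.2.trans htT⟩
        refine (hb'le x hx').trans ?_
        have : x ^ (-ε) ≤ s ^ (-ε) :=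
          Real.rpow_le_rpow_of_nonpos hs0 hx.1 (by linarith)
        exact mul_le_mul_of_nonneg_left this hC0.le
      have h3 : (∫ _u in s..t, C * s ^ (-ε)) = C * s ^ (-ε) * (t - s) := by
        rw [intervalIntegral.integral_const, smul_eq_mul, mul_comm]
      rw [hftc]
      exact (h1.trans h2).trans_eq h3
    have hq : |b t - b s| / (t - s) * t ^ ε ≤ C * s ^ (-ε) * (t - s) / (t - s) * t ^ ε := by
      gcongr
    refine lt_of_le_of_lt hq ?_
    have heq : C * s ^ (-ε) * (t - s) / (t - s) * t ^ ε = C * (s ^ (-ε) * t ^ ε) := by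
      field_simp
    rw [heq]
    -- s^(-ε) * t^ε = (t/s)^ε ≤ 2^ε ≤ 2
    have hpow : s ^ (-ε) * t ^ ε ≤ 2 := by
      have h1 : s ^ (-ε) * t ^ ε = (t / s) ^ ε := by
        rw [Real.div_rpow ht0.le hs0.le, Real.rpow_neg hs0.le, div_eq_mul_inv, mul_comm]
      rw [h1]
      have hts2 : t / s ≤ 2 := by
        rw [div_le_iff₀ hs0]; linarith
      calc (t / s) ^ ε ≤ (2:ℝ) ^ ε :=
            Real.rpow_le_rpow (by positivity) hts2 hε.le
        _ ≤ (2:ℝ) ^ (1:ℝ) := Real.rpow_le_rpow_of_exponent_le (by norm_num) (by linarith)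
        _ = 2 := by norm_num
    calc C * (s ^ (-ε) * t ^ ε) ≤ C * 2 := mul_le_mul_of_nonneg_left hpow hC0.le
      _ < 2 * C / (1 - ε) + 2 * C + 1 := by
          rw [mul_comm]
          have : (0:ℝ) < 2 * C / (1 - ε) := by positivity
          linarith
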